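/- arXiv:1404.1940 — 2 statements merged into one kernel-verified Lean document; each statement's English description precedes it below -/
import Mathlib

section
/- Let b ∈ ℝ, a > 0, 0 < λ ≤ 1, n a positive integer, and d_0,…,d_{n−1} ∈ ℂ. Let f̂ : ℝ → ℂ be measurable and set g(ω) := e^{ibω} f̂(ω). Define, for ω > 0, G₊(ω) := g(ω) − Σ_{s=0}^{n−1} d_s ω^{s+λ−1} and G₋(ω) := g(−ω) − Σ_{s=0}^{n−1} d_s e^{iπ(s+λ−1)} ω^{s+λ−1}. Assume that the functions ω ↦ g(ω) ω² e^{−(aω)²/2}, ω ↦ g(−ω) ω² e^{−(aω)²/2}, ω ↦ G₊(ω) ω² e^{−(aω)²/2} and ω ↦ G₋(ω) ω² e^{−(aω)²/2} are integrable on (0,∞). Then (√a / 2π) ∫_ℝ e^{ibω} f̂(ω) · √(2π) (aω)² e^{−(aω)²/2} dω = (1/(2√π)) Σ_{s=0}^{n−1} d_s 2^{(s+λ+1)/2} Γ((s+λ+2)/2) (1 + e^{iπ(s+λ−1)}) a^{−s−λ+1/2} + δ_n(a), where δ_n(a) = (√a/√(2π)) ∫_0^∞ (G₊(ω) + G₋(ω))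 (aω)² e^{−(aω)²/2} dω. -/
open MeasureTheory Set Complex

private lemma coef_eq' (a lam : ℝ) (ha : 0 < a) (s : ℕ) :
    Real.sqrt a / (2 * Real.pi) * (Real.sqrt (2 * Real.pi) * a ^ 2) *
      ((a ^ 2 / 2) ^ (-(((s : ℝ) + lam) + 2) / 2) * (1 / 2) * Real.Gamma ((((s : ℝ) + lam) + 2) / 2))
    = 1 / (2 * Real.sqrt Real.pi) *
        (2 ^ ((((s : ℝ) + lam) + 1) / 2) * Real.Gamma ((((s : ℝ) + lam) + 2) / 2)) *
        (a ^ (-(s : ℝ) - lam + 1 / 2)) := by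
  have hπ : (0:ℝ) < Real.pi := Real.pi_pos
  set t : ℝ := (s : ℝ) + lam with ht
  have e1 : (a ^ 2 / 2 : ℝ) ^ (-(t + 2) / 2) = a ^ (-(t + 2)) * 2 ^ ((t + 2) / 2) := by
    rw [Real.div_rpow (by positivity) (by norm_num), ← Real.rpow_natCast a 2,
      ← Real.rpow_mul ha.le, div_eq_mul_inv, ← Real.rpow_neg (by norm_num : (0:ℝ) ≤ 2),
      show ((2:ℕ):ℝ) * (-(t+2)/2) = -(t+2) by push_cast; ring,
      show -(-(t+2)/2) = (t+2)/2 by ring]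
  have e2 : Real.sqrt a = a ^ (1/2 : ℝ) := Real.sqrt_eq_rpow a
  have e3 : a ^ (-(t + 2)) * a ^ 2 * a ^ (1/2 : ℝ) = a ^ (-t + 1/2 : ℝ) := by
    rw [← Real.rpow_natCast a 2, ← Real.rpow_add ha, ← Real.rpow_add ha]
    norm_num
  have e4 : (2:ℝ) ^ ((t + 2) / 2) = 2 ^ ((t + 1) / 2) * 2 ^ (1/2 : ℝ) := by
    rw [← Real.rpow_add (by norm_num : (0:ℝ) < 2)]; ring_nf
  have e5 : Real.sqrt (2 * Real.pi) = 2 ^ (1/2 : ℝ) * Real.sqrt Real.pi := by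
    rw [Real.sqrt_mul (by norm_num : (0:ℝ) ≤ 2), Real.sqrt_eq_rpow]
  have e6 : (2:ℝ) ^ (1/2 : ℝ) * 2 ^ (1/2 : ℝ) = 2 := by
    rw [← Real.rpow_add (by norm_num : (0:ℝ) < 2)]; norm_num
  have e7 : Real.sqrt Real.pi * Real.sqrt Real.pi = Real.pi := Real.mul_self_sqrt hπ.le
  have hexp : -(s:ℝ) - lam + 1/2 = -t + 1/2 := by rw [ht]; ring
  rw [hexp, e1, e2, e4, e5]
  have hsπ : (0:ℝ) < Real.sqrt Real.pi := Real.sqrt_pos.mpr hπ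
  set X := a ^ (1/2 : ℝ); set p := Real.sqrt Real.pi
  set r := (2:ℝ) ^ (1/2 : ℝ); set Y := a ^ (-(t+2))
  set T := (2:ℝ) ^ ((t+1)/2); set G := Real.Gamma ((t+2)/2); set Z := a ^ (-t + 1/2 : ℝ)
  have e3' : Y * a ^ 2 * X = Z := e3
  field_simp
  linear_combination (X*p^2*a^2*Y*T*G)*e6 + (2*p^2*T*G)*e3' + (2*T*G*Z)*e7

/-- Asymptotic expansion with error term for the Mexican hat wavelet transform, in its
Fourier-domain form: with `g(ω) = e^{ibω} f̂(ω)`,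
`(√a/2π) ∫_ℝ g(ω) √(2π) (aω)² e^{−(aω)²/2} dω
  = (1/(2√π)) Σ_{s<n} d_s 2^{(s+λ+1)/2} Γ((s+λ+2)/2) (1 + e^{iπ(s+λ−1)}) a^{−s−λ+1/2} + δ_n(a)`,
where `δ_n(a) = (√a/√(2π)) ∫_0^∞ (G₊(ω)+G₋(ω)) (aω)² e^{−(aω)²/2} dω`. -/
theorem mexicanHat_wavelet_expansion (b a lam : ℝ) (ha : 0 < a)
    (hlam0 : 0 < lam) (hlam1 : lam ≤ 1) (n : ℕ) (hn : 0 < n) (d : ℕ → ℂ)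
    (fhat : ℝ → ℂ) (hfhat : Measurable fhat)
    (g Gp Gm : ℝ → ℂ)
    (hg : ∀ ω : ℝ, g ω = Complex.exp (Complex.I * b * ω) * fhat ω)
    (hGp : ∀ ω ∈ Ioi (0 : ℝ),
      Gp ω = g ω - ∑ s ∈ Finset.range n, d s * ((ω ^ ((s : ℝ) + lam - 1) : ℝ) : ℂ))
    (hGm : ∀ ω ∈ Ioi (0 : ℝ),
      Gm ω = g (-ω) - ∑ s ∈ Finset.range n,
        d s * Complex.exp (Complex.I * Real.pi * ((s : ℝ) + lam - 1)) *
          ((ω ^ ((s : ℝ) + lam - 1) : ℝ) : ℂ))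
    (hint1 : IntegrableOn
      (fun ω : ℝ => g ω * ((ω ^ 2 * Real.exp (-(a * ω) ^ 2 / 2) : ℝ) : ℂ)) (Ioi 0))
    (hint2 : IntegrableOn
      (fun ω : ℝ => g (-ω) * ((ω ^ 2 * Real.exp (-(a * ω) ^ 2 / 2) : ℝ) : ℂ)) (Ioi 0))
    (hint3 : IntegrableOn
      (fun ω : ℝ => Gp ω * ((ω ^ 2 * Real.exp (-(a * ω) ^ 2 / 2) : ℝ) : ℂ)) (Ioi 0))
    (hint4 : IntegrableOn
      (fun ω : ℝ => Gm ω * ((ω ^ 2 * Real.exp (-(a * ω) ^ 2 / 2) : ℝ) : ℂ)) (Ioi 0)) :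
    ((Real.sqrt a / (2 * Real.pi) : ℝ) : ℂ) *
        (∫ ω : ℝ, Complex.exp (Complex.I * b * ω) * fhat ω *
          ((Real.sqrt (2 * Real.pi) * (a * ω) ^ 2 * Real.exp (-(a * ω) ^ 2 / 2) : ℝ) : ℂ))
      = ((1 / (2 * Real.sqrt Real.pi) : ℝ) : ℂ) *
          (∑ s ∈ Finset.range n, d s *
            ((2 ^ (((s : ℝ) + lam + 1) / 2) * Real.Gamma (((s : ℝ) + lam + 2) / 2) : ℝ) : ℂ) *
            (1 + Complex.exp (Complex.I * Real.pi * ((s : ℝ) + lam - 1))) *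
            ((a ^ (-(s : ℝ) - lam + 1 / 2) : ℝ) : ℂ))
        + ((Real.sqrt a / Real.sqrt (2 * Real.pi) : ℝ) : ℂ) *
            ∫ ω in Ioi (0 : ℝ),
              (Gp ω + Gm ω) * (((a * ω) ^ 2 * Real.exp (-(a * ω) ^ 2 / 2) : ℝ) : ℂ) := by
  have hb2 : (0:ℝ) < a ^ 2 / 2 := by positivity
  set w : ℝ → ℝ := fun x => x ^ 2 * Real.exp (-(a * x) ^ 2 / 2) with hw
  set F : ℝ → ℂ := fun x => g x * ((w x : ℝ) : ℂ) with hF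
  -- w is even
  have hweven : ∀ x : ℝ, w (-x) = w x := by
    intro x; simp only [hw]; ring_nf
  have hFneg : (fun x : ℝ => F (-x)) = fun x => g (-x) * ((w x : ℝ) : ℂ) := by
    funext x; simp only [hF, hweven]
  -- integrability of F on Iic 0
  have hIio : IntegrableOn F (Iio 0) := by
    rw [← (Measure.measurePreserving_neg (volume : Measure ℝ)).integrableOn_comp_preimage
      (Homeomorph.neg ℝ).measurableEmbedding]
    simp only [Function.comp_def, neg_preimage, neg_Iio, neg_zero]
    rw [hFneg]
    exact hint2
  have hIic : IntegrableOn F (Iic 0) := by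
    rwa [integrableOn_Iic_iff_integrableOn_Iio]
  -- split whole-line integral
  have hsplit : (∫ x : ℝ, F x) =
      (∫ x in Ioi (0:ℝ), g (-x) * ((w x : ℝ) : ℂ)) + ∫ x in Ioi (0:ℝ), F x := by
    rw [← intervalIntegral.integral_Iic_add_Ioi hIic hint1]
    congr 1
    have hcn := integral_comp_neg_Ioi (0:ℝ) F
    rw [neg_zero] at hcn
    rw [← hcn, hFneg]
  -- restated integrability hypotheses with w
  have hint3' : IntegrableOn (fun x => Gp x * ((w x : ℝ) : ℂ)) (Ioi 0) := hint3
  have hint4' : IntegrableOn (fun x => Gm x * ((w x : ℝ) : ℂ)) (Ioi 0) := hint4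
  -- moment integrals
  have hq : ∀ s : ℕ, (-1:ℝ) < (s:ℝ) + lam + 1 := fun s => by
    have : (0:ℝ) ≤ (s:ℝ) := Nat.cast_nonneg s
    linarith
  have hveq : ∀ s : ℕ, ∀ x ∈ Ioi (0:ℝ),
      x ^ ((s:ℝ) + lam + 1) * Real.exp (-(a^2/2) * x ^ (2:ℝ))
        = x ^ ((s:ℝ) + lam - 1) * w x := by
    intro s x hx
    have hx0 : (0:ℝ) < x := hx
    simp only [hw]
    rw [show ((s:ℝ) + lam + 1) = ((s:ℝ) + lam - 1) + 2 by ring, Real.rpow_add hx0,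
      Real.rpow_two, show -(a^2/2) * x ^ (2:ℕ) = -(a * x) ^ 2 / 2 by ring]
    ring
  have hvint : ∀ s : ℕ, IntegrableOn
      (fun x => x ^ ((s:ℝ) + lam + 1) * Real.exp (-(a^2/2) * x ^ (2:ℝ))) (Ioi 0) := fun s =>
    integrableOn_rpow_mul_exp_neg_mul_rpow (hq s) two_pos hb2
  have huint : ∀ s : ℕ, IntegrableOn (fun x => x ^ ((s:ℝ)+lam-1) * w x) (Ioi 0) := fun s =>
    (hvint s).congr_fun (fun x hx => hveq s x hx) measurableSet_Ioi
  set M : ℕ → ℝ := fun s => (a^2/2) ^ (-(((s:ℝ)+lam) + 2)/2) * (1/2)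
      * Real.Gamma ((((s:ℝ)+lam) + 2)/2) with hM
  have hMval : ∀ s : ℕ, (∫ x in Ioi (0:ℝ), x ^ ((s:ℝ)+lam-1) * w x) = M s := by
    intro s
    rw [← setIntegral_congr_fun measurableSet_Ioi (fun x hx => hveq s x hx),
      integral_rpow_mul_exp_neg_mul_rpow two_pos (hq s) hb2, hM,
      show ((s:ℝ) + lam + 1 + 1) = (((s:ℝ) + lam) + 2) by ring]
  set E : ℕ → ℂ := fun s => Complex.exp (Complex.I * Real.pi * ((s:ℝ) + lam - 1)) with hE
  -- decomposition on the positive side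
  have hP : (∫ x in Ioi (0:ℝ), F x)
      = (∫ x in Ioi (0:ℝ), Gp x * ((w x : ℝ) : ℂ))
        + ∑ s ∈ Finset.range n, d s * ((M s : ℝ) : ℂ) := by
    have heq : EqOn F (fun x => Gp x * ((w x : ℝ) : ℂ)
        + ∑ s ∈ Finset.range n, d s * (((x ^ ((s:ℝ)+lam-1) * w x : ℝ)) : ℂ)) (Ioi 0) := by
      intro x hx
      simp only [hF]
      rw [hGp x hx, sub_mul, Finset.sum_mul]
      have : ∀ s ∈ Finset.range n, d s * ((x ^ ((s:ℝ)+lam-1) : ℝ) : ℂ) * ((w x : ℝ) : ℂ)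
          = d s * (((x ^ ((s:ℝ)+lam-1) * w x : ℝ)) : ℂ) := by
        intro s _; push_cast; ring
      rw [Finset.sum_congr rfl this]
      ring
    have hsum_int : IntegrableOn (fun x => ∑ s ∈ Finset.range n,
        d s * (((x ^ ((s:ℝ)+lam-1) * w x : ℝ)) : ℂ)) (Ioi 0) :=
      integrable_finset_sum _ (fun s _ => ((huint s).ofReal).const_mul (d s))
    rw [setIntegral_congr_fun measurableSet_Ioi heq, integral_add hint3' hsum_int]
    congr 1
    refine (integral_finset_sum _ (fun s _ => ((huint s).ofReal).const_mul (d s))).trans ?_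
    refine Finset.sum_congr rfl (fun s _ => ?_)
    rw [integral_const_mul, integral_ofReal, hMval s]
    norm_cast
  -- decomposition on the negative side
  have hQ : (∫ x in Ioi (0:ℝ), g (-x) * ((w x : ℝ) : ℂ))
      = (∫ x in Ioi (0:ℝ), Gm x * ((w x : ℝ) : ℂ))
        + ∑ s ∈ Finset.range n, d s * E s * ((M s : ℝ) : ℂ) := by
    have heq : EqOn (fun x : ℝ => g (-x) * ((w x : ℝ) : ℂ)) (fun x => Gm x * ((w x : ℝ) : ℂ)
        + ∑ s ∈ Finset.range n, d s * E s * (((x ^ ((s:ℝ)+lam-1) * w x : ℝ)) : ℂ)) (Ioi 0) := by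
      intro x hx
      simp only
      rw [hGm x hx, sub_mul, Finset.sum_mul]
      have : ∀ s ∈ Finset.range n, d s * E s * ((x ^ ((s:ℝ)+lam-1) : ℝ) : ℂ) * ((w x : ℝ) : ℂ)
          = d s * E s * (((x ^ ((s:ℝ)+lam-1) * w x : ℝ)) : ℂ) := by
        intro s _; push_cast; ring
      rw [Finset.sum_congr rfl this]
      ring
    have hsum_int : IntegrableOn (fun x => ∑ s ∈ Finset.range n,
        d s * E s * (((x ^ ((s:ℝ)+lam-1) * w x : ℝ)) : ℂ)) (Ioi 0) :=
      integrable_finset_sum _ (fun s _ => ((huint s).ofReal).const_mul (d s * E s))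
    rw [setIntegral_congr_fun measurableSet_Ioi heq, integral_add hint4' hsum_int]
    congr 1
    refine (integral_finset_sum _ (fun s _ => ((huint s).ofReal).const_mul (d s * E s))).trans ?_
    refine Finset.sum_congr rfl (fun s _ => ?_)
    rw [integral_const_mul, integral_ofReal, hMval s]
    norm_cast
  -- rewrite the LHS integral
  have hA : (∫ ω : ℝ, Complex.exp (Complex.I * b * ω) * fhat ω *
        ((Real.sqrt (2 * Real.pi) * (a * ω) ^ 2 * Real.exp (-(a * ω) ^ 2 / 2) : ℝ) : ℂ))
      = ((Real.sqrt (2 * Real.pi) * a ^ 2 : ℝ) : ℂ) * ∫ x : ℝ, F x := by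
    rw [← integral_const_mul]
    congr 1
    funext x
    simp only [hF, hw]
    rw [← hg x]
    push_cast
    ring
  have hErr : (∫ x in Ioi (0:ℝ),
        (Gp x + Gm x) * (((a * x) ^ 2 * Real.exp (-(a * x) ^ 2 / 2) : ℝ) : ℂ))
      = ((a ^ 2 : ℝ) : ℂ) * ((∫ x in Ioi (0:ℝ), Gp x * ((w x : ℝ) : ℂ))
          + ∫ x in Ioi (0:ℝ), Gm x * ((w x : ℝ) : ℂ)) := by
    rw [← integral_add hint3' hint4', ← integral_const_mul]
    refine setIntegral_congr_fun measurableSet_Ioi (fun x hx => ?_)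
    simp only [hw]
    push_cast
    ring
  have key1 : ((Real.sqrt a / (2 * Real.pi) : ℝ) : ℂ) * ((Real.sqrt (2 * Real.pi) * a ^ 2 : ℝ) : ℂ)
      = ((Real.sqrt a / Real.sqrt (2 * Real.pi) : ℝ) : ℂ) * ((a ^ 2 : ℝ) : ℂ) := by
    have h2π : Real.sqrt (2 * Real.pi) * Real.sqrt (2 * Real.pi) = 2 * Real.pi :=
      Real.mul_self_sqrt (by positivity)
    have hr : Real.sqrt a / (2 * Real.pi) * (Real.sqrt (2 * Real.pi) * a ^ 2)
        = Real.sqrt a / Real.sqrt (2 * Real.pi) * a ^ 2 := by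
      have hs : (0:ℝ) < Real.sqrt (2 * Real.pi) := Real.sqrt_pos.mpr (by positivity)
      have hπ : (0:ℝ) < Real.pi := Real.pi_pos
      have h2 : Real.sqrt 2 * Real.sqrt 2 = 2 := Real.mul_self_sqrt (by norm_num)
      have hpp : Real.sqrt Real.pi * Real.sqrt Real.pi = Real.pi :=
        Real.mul_self_sqrt hπ.le
      field_simp
      linear_combination h2π
    rw [← Complex.ofReal_mul, ← Complex.ofReal_mul, hr]
  have hterm : ∀ s ∈ Finset.range n,
      ((Real.sqrt a / (2 * Real.pi) : ℝ) : ℂ) * ((Real.sqrt (2 * Real.pi) * a ^ 2 : ℝ) : ℂ)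
        * (d s * ((M s : ℝ) : ℂ) + d s * E s * ((M s : ℝ) : ℂ))
      = ((1 / (2 * Real.sqrt Real.pi) : ℝ) : ℂ) * (d s *
          ((2 ^ (((s : ℝ) + lam + 1) / 2) * Real.Gamma (((s : ℝ) + lam + 2) / 2) : ℝ) : ℂ) *
          (1 + E s) * ((a ^ (-(s : ℝ) - lam + 1 / 2) : ℝ) : ℂ)) := by
    intro s _
    have hc := coef_eq' a lam ha s
    have hcC : ((Real.sqrt a / (2 * Real.pi) * (Real.sqrt (2 * Real.pi) * a ^ 2) * M s : ℝ) : ℂ)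
        = ((1 / (2 * Real.sqrt Real.pi) * (2 ^ (((s : ℝ) + lam + 1) / 2)
            * Real.Gamma (((s : ℝ) + lam + 2) / 2)) * a ^ (-(s : ℝ) - lam + 1 / 2) : ℝ) : ℂ) := by
      simp only [hM]
      exact_mod_cast congrArg Complex.ofReal hc
    push_cast at hcC ⊢
    linear_combination (d s * (1 + E s)) * hcC
  have hsum : ((Real.sqrt a / (2 * Real.pi) : ℝ) : ℂ) * ((Real.sqrt (2 * Real.pi) * a ^ 2 : ℝ) : ℂ)
        * ((∑ s ∈ Finset.range n, d s * ((M s : ℝ) : ℂ))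
          + ∑ s ∈ Finset.range n, d s * E s * ((M s : ℝ) : ℂ))
      = ((1 / (2 * Real.sqrt Real.pi) : ℝ) : ℂ) *
          (∑ s ∈ Finset.range n, d s *
            ((2 ^ (((s : ℝ) + lam + 1) / 2) * Real.Gamma (((s : ℝ) + lam + 2) / 2) : ℝ) : ℂ) *
            (1 + E s) * ((a ^ (-(s : ℝ) - lam + 1 / 2) : ℝ) : ℂ)) := by
    rw [← Finset.sum_add_distrib]
    simp only [Finset.mul_sum]
    exact Finset.sum_congr rfl hterm
  rw [hA, hsplit, hQ, hP, hErr]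
  set P := ∫ x in Ioi (0:ℝ), Gp x * ((w x : ℝ) : ℂ) with hPdef
  set Q := ∫ x in Ioi (0:ℝ), Gm x * ((w x : ℝ) : ℂ) with hQdef
  linear_combination hsum + (P + Q) * key1
end

section
/- For every z ∈ ℂ with 0 < Re z < 1, the generalized Mellin transform of e^{it} satisfies lim_{ε→0+} ∫_0^∞ t^{z−1} e^{it} e^{−εt} dt = e^{iπz/2} Γ(z). -/
open MeasureTheory Filter Set Complex
open scoped Topology

noncomputable def mellinG (z s : ℂ) : ℂ :=
  ∫ t in Ioi (0 : ℝ), (t : ℂ) ^ (z - 1) * Complex.exp (-s * t)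

lemma mellin_aux_cont (w : ℂ) : ContinuousOn (fun t : ℝ => (t : ℂ) ^ w) (Ioi 0) := by
  apply continuousOn_of_forall_continuousAt
  intro x hx
  have : ContinuousAt (fun x : ℂ => x ^ w) ↑x :=
    continuousAt_cpow_const <| ofReal_mem_slitPlane.2 hx
  exact this.comp continuous_ofReal.continuousAt

lemma mellin_aux_meas (z s : ℂ) :
    AEStronglyMeasurable (fun t : ℝ => (t : ℂ) ^ (z - 1) * Complex.exp (-s * t))
      (volume.restrict (Ioi 0)) := by
  refine ContinuousOn.aestronglyMeasurable ?_ measurableSet_Ioi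
  exact (mellin_aux_cont (z - 1)).mul
    ((Complex.continuous_exp.comp ((continuous_const.mul continuous_ofReal))).continuousOn)

lemma mellin_bound_integrable {a b : ℝ} (ha : -1 < a) (hb : 0 < b) :
    IntegrableOn (fun t : ℝ => t ^ a * Real.exp (-b * t)) (Ioi 0) := by
  have := integrableOn_rpow_mul_exp_neg_mul_rpow ha zero_lt_one hb
  simpa using this

lemma mellin_integrand_norm {z s : ℂ} {t : ℝ} (ht : 0 < t) :
    ‖(t : ℂ) ^ (z - 1) * Complex.exp (-s * t)‖ = t ^ (z.re - 1) * Real.exp (-s.re * t) := by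
  rw [norm_mul,
    norm_cpow_eq_rpow_re_of_pos ht, Complex.norm_exp]
  simp [Complex.mul_re]

lemma mellinG_integrable {z s : ℂ} (hz : 0 < z.re) (hs : 0 < s.re) :
    IntegrableOn (fun t : ℝ => (t : ℂ) ^ (z - 1) * Complex.exp (-s * t)) (Ioi 0) := by
  refine Integrable.mono' (mellin_bound_integrable (a := z.re - 1) (by linarith) hs) (mellin_aux_meas z s) ?_
  refine (ae_restrict_iff' measurableSet_Ioi).mpr ?_
  filter_upwards with t ht
  rw [mellin_integrand_norm ht]

lemma mellinG_eq_on_real {z : ℂ} (hz : 0 < z.re) {x : ℝ} (hx : 0 < x) :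
    mellinG z x = (1 / (x : ℂ)) ^ z * Complex.Gamma z := by
  rw [← integral_cpow_mul_exp_neg_mul_Ioi hz hx, mellinG]
  congr 1 with t
  ring_nf

lemma mellinG_differentiableOn {z : ℂ} (hz : 0 < z.re) :
    DifferentiableOn ℂ (mellinG z) {s : ℂ | 0 < s.re} := by
  intro s₀ hs₀
  refine DifferentiableAt.differentiableWithinAt ?_
  have hσ : 0 < s₀.re := hs₀
  set σ := s₀.re with hσdef
  -- derivative candidate
  set F' : ℂ → ℝ → ℂ := fun s t => (t : ℂ) ^ (z - 1) * (Complex.exp (-s * t) * (-1 * t)) with hF'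
  have key := hasDerivAt_integral_of_dominated_loc_of_deriv_le
    (F := fun s (t : ℝ) => (t : ℂ) ^ (z - 1) * Complex.exp (-s * t))
    (F' := F') (x₀ := s₀)
    (bound := fun t : ℝ => t ^ z.re * Real.exp (-(σ / 2) * t))
    (μ := volume.restrict (Ioi 0))
    (Metric.ball_mem_nhds s₀ (half_pos hσ))
    (Eventually.of_forall fun s => mellin_aux_meas z s)
    (mellinG_integrable hz hσ)
    ?_ ?_ ?_ ?_
  · exact key.2.differentiableAt
  · -- F' s₀ measurable
    refine ContinuousOn.aestronglyMeasurable ?_ measurableSet_Ioi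
    have h1 : ContinuousOn (fun t : ℝ => (t : ℂ) ^ (z - 1)) (Ioi 0) := by
      apply continuousOn_of_forall_continuousAt
      intro x hx
      exact (continuousAt_cpow_const <| ofReal_mem_slitPlane.2 hx).comp
        continuous_ofReal.continuousAt
    exact h1.mul (((Complex.continuous_exp.comp (continuous_const.mul continuous_ofReal)).mul
      (continuous_const.mul continuous_ofReal)).continuousOn)
  · -- bound
    refine (ae_restrict_iff' measurableSet_Ioi).mpr ?_
    filter_upwards with t ht s hs
    rw [mem_Ioi] at ht
    have hsre : σ / 2 ≤ s.re := by
      have h2 : |(s - s₀).re| ≤ ‖s - s₀‖ := Complex.abs_re_le_norm _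
      rw [Metric.mem_ball, Complex.dist_eq] at hs
      have := abs_le.mp (h2.trans hs.le) |>.1
      simp only [Complex.sub_re] at this
      linarith
    have hnorm : ‖F' s t‖ = t ^ (z.re - 1) * Real.exp (-s.re * t) * t := by
      rw [hF']
      simp only [norm_mul, ← mul_assoc]
      rw [← norm_mul, mellin_integrand_norm ht]
      congr 1
      · simp [abs_of_pos ht]
      · simp [Complex.norm_real, abs_of_pos ht]
    rw [hnorm]
    have h3 : t ^ (z.re - 1) * Real.exp (-s.re * t) * t
        = t ^ z.re * Real.exp (-s.re * t) := by
      rw [show z.re = (z.re - 1) + 1 by ring, Real.rpow_add ht, Real.rpow_one]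
      ring
    rw [h3]
    have h4 : Real.exp (-s.re * t) ≤ Real.exp (-(σ / 2) * t) := by
      apply Real.exp_le_exp.mpr
      nlinarith
    have h5 : (0:ℝ) ≤ t ^ z.re := Real.rpow_nonneg ht.le _
    nlinarith [Real.exp_pos (-s.re * t), Real.exp_pos (-(σ/2) * t)]
  · exact mellin_bound_integrable (by linarith) (by positivity)
  · -- differentiability
    refine (ae_restrict_iff' measurableSet_Ioi).mpr ?_
    filter_upwards with t ht s _
    have : HasDerivAt (fun s : ℂ => Complex.exp (-s * t)) (Complex.exp (-s * t) * (-1 * t)) s :=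
      ((hasDerivAt_id s).neg.mul_const (t : ℂ)).cexp
    simpa [F'] using this.const_mul ((t : ℂ) ^ (z - 1))

lemma mellinG_eq {z : ℂ} (hz : 0 < z.re) {s : ℂ} (hs : 0 < s.re) :
    mellinG z s = (1 / s) ^ z * Complex.Gamma z := by
  have hUo : IsOpen {s : ℂ | 0 < s.re} := isOpen_lt continuous_const Complex.continuous_re
  have hUc : IsPreconnected {s : ℂ | 0 < s.re} := (convex_halfSpace_re_gt 0).isPreconnected
  have hf : AnalyticOnNhd ℂ (mellinG z) {s : ℂ | 0 < s.re} :=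
    (mellinG_differentiableOn hz).analyticOnNhd hUo
  have hg : AnalyticOnNhd ℂ (fun s => (1 / s) ^ z * Complex.Gamma z) {s : ℂ | 0 < s.re} := by
    refine DifferentiableOn.analyticOnNhd (fun w hw => ?_) hUo
    refine DifferentiableAt.differentiableWithinAt ?_
    have hwre : 0 < w.re := hw
    have hw0 : w ≠ 0 := fun h => by rw [h] at hwre; simp at hwre
    have h2 : (1 / w) ∈ Complex.slitPlane := by
      refine Or.inl ?_
      rw [one_div, Complex.inv_re]
      exact div_pos hwre (Complex.normSq_pos.mpr hw0)
    have h3 : HasDerivAt (fun s : ℂ => 1 / s) (-(w ^ 2)⁻¹) w := by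
      simpa [one_div] using hasDerivAt_inv hw0
    exact (h3.cpow_const h2).differentiableAt.mul_const _
  have h1U : (1 : ℂ) ∈ {s : ℂ | 0 < s.re} := by norm_num
  have hfreq : ∃ᶠ w in 𝓝[≠] (1 : ℂ), mellinG z w = (1 / w) ^ z * Complex.Gamma z := by
    have htend : Tendsto (fun x : ℝ => (x : ℂ)) (𝓝[>] (1 : ℝ)) (𝓝[≠] (1 : ℂ)) := by
      rw [tendsto_nhdsWithin_iff]
      constructor
      · exact tendsto_nhdsWithin_of_tendsto_nhds
          (by have := Complex.continuous_ofReal.continuousAt.tendsto (x := (1 : ℝ)); rwa [Complex.ofReal_one] at this)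
      · filter_upwards [self_mem_nhdsWithin] with x hx
        simp only [mem_compl_iff, mem_singleton_iff]
        intro h
        have hx1 : x = 1 := by exact_mod_cast h
        rw [mem_Ioi] at hx
        exact absurd hx1 (ne_of_gt hx)
    refine htend.frequently ?_
    refine Eventually.frequently ?_
    filter_upwards [self_mem_nhdsWithin] with x hx
    exact mellinG_eq_on_real hz (by rw [mem_Ioi] at hx; linarith)
  exact hf.eqOn_of_preconnected_of_frequently_eq hg hUc h1U hfreq hs

/-- The generalized Mellin transform of `e^{it}` (with `p = 1`):
for `0 < Re z < 1`, `lim_{ε→0+} ∫_0^∞ t^{z−1} e^{it} e^{−εt} dt = e^{iπz/2} Γ(z)`. -/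
theorem mellin_exp_I (z : ℂ) (h0 : 0 < z.re) (h1 : z.re < 1) :
    Tendsto
      (fun ε : ℝ => ∫ t in Ioi (0 : ℝ),
        (t : ℂ) ^ (z - 1) * Complex.exp (Complex.I * t) * Complex.exp (-(ε : ℂ) * t))
      (𝓝[>] (0 : ℝ))
      (𝓝 (Complex.exp (Complex.I * Real.pi * z / 2) * Complex.Gamma z)) := by
  have hval : (1 / ((0 : ℂ) - I)) ^ z = Complex.exp (Complex.I * Real.pi * z / 2) := by
    have h1I : (1 : ℂ) / ((0 : ℂ) - I) = I := by
      rw [zero_sub, div_neg, one_div, Complex.inv_I, neg_neg]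
    rw [h1I, Complex.cpow_def_of_ne_zero Complex.I_ne_zero, Complex.log_I]
    congr 1
    ring
  have hlim : Tendsto (fun ε : ℝ => (1 / ((ε : ℂ) - I)) ^ z * Complex.Gamma z)
      (𝓝[>] (0 : ℝ)) (𝓝 (Complex.exp (Complex.I * Real.pi * z / 2) * Complex.Gamma z)) := by
    rw [← hval]
    have hne : ((0 : ℂ)) - I ≠ 0 := by
      intro h
      have := congrArg Complex.im h
      simp at this
    have hc1 : Tendsto (fun ε : ℝ => 1 / ((ε : ℂ) - I)) (𝓝[>] (0 : ℝ))
        (𝓝 (1 / ((0 : ℂ) - I))) := by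
      apply Tendsto.mono_left ?_ nhdsWithin_le_nhds
      refine Tendsto.div tendsto_const_nhds ?_ hne
      exact ((Complex.continuous_ofReal.sub continuous_const).tendsto 0).congr (by simp)
    have hc2 : ContinuousAt (fun w : ℂ => w ^ z) (1 / ((0 : ℂ) - I)) := by
      apply continuousAt_cpow_const
      refine Or.inr ?_
      rw [zero_sub, div_neg, one_div, Complex.inv_I, neg_neg]
      simp
    exact (hc2.tendsto.comp hc1).mul_const _
  refine hlim.congr' ?_
  filter_upwards [self_mem_nhdsWithin] with ε hε
  rw [mem_Ioi] at hε
  have h1' : mellinG z ((ε : ℂ) - I) = (1 / ((ε : ℂ) - I)) ^ z * Complex.Gamma z :=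
    mellinG_eq h0 (by simp [Complex.sub_re, hε])
  rw [← h1', mellinG]
  congr 1 with t
  rw [mul_assoc, ← Complex.exp_add]
  ring_nf
end
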